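/- Let 1 → T → U →Ad→ I → 1 be a central extension of groups, I normal in a group A, and suppose the conjugation action of A on U fixes T pointwise. Then two homomorphisms α, β : G → A/I that are conjugate by an element of A/I have equal obstruction classes in H³(G, T); i.e., the obstruction Ob : Hom(G, A/I)/conjugacy → H³(G, T) is a well-defined conjugacy invariant. -/
import Mathlib


theorem mycentral_pull {U : Type*} [Group U] {z : U} (h : ∀ x : U, z * x = x * z) (x y : U) :
    x * (z * y) = z * (x * y) := by rw [← mul_assoc, ← h, mul_assoc]

theorem mycentral_inv {U : Type*} [Group U] {z : U} (h : ∀ x : U, z * x = x * z) (x : U) :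
    z⁻¹ * x = x * z⁻¹ := by
  calc z⁻¹ * x = z⁻¹ * (x * z) * z⁻¹ := by group
  _ = z⁻¹ * (z * x) * z⁻¹ := by rw [← h x]
  _ = x * z⁻¹ := by group


/-- `(a, u)` is a lifting pair for the outer action `α : G → A ⧸ I`, `I = Ad.range`. -/
def LiftPair {U A G : Type*} [Group U] [Group A] [Group G]
    (Ad : U →* A) (α : G → A ⧸ Ad.range) (a : G → A) (u : G → G → U) : Prop :=
  a 1 = 1 ∧ (∀ g : G, (QuotientGroup.mk (a g) : A ⧸ Ad.range) = α g) ∧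
    ∀ g h : G, a g * a h = Ad (u g h) * a (g * h)

/-- The obstruction `Ob(α)(g,h,k) = u(g,h) u(gh,k) (a_g(u(h,k)) u(g,hk))⁻¹`. -/
def obstr {U A G : Type*} [Group U] [Group A] [Group G]
    (φ : A →* MulAut U) (a : G → A) (u : G → G → U) : G → G → G → U :=
  fun g h k => u g h * u (g * h) k * (φ (a g) (u h k) * u g (h * k))⁻¹

/-- The 3-coboundary of `c : G × G → T` (trivial action), in multiplicative notation. -/
def cob3 {U G : Type*} [Group U] [Group G] (c : G → G → U) : G → G → G → U :=
  fun g h k => c h k * (c (g * h) k)⁻¹ * c g (h * k) * (c g h)⁻¹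

/-- conjugate homomorphisms `α, β : G → A/I` have equal obstruction classes
in `H³(G, T)`: the obstruction is a conjugacy invariant. -/
theorem stmt4 {U A G : Type*} [Group U] [Group A] [Group G]
    (Ad : U →* A) (φ : A →* MulAut U)
    (hcomp : ∀ (a : A) (v : U), Ad (φ a v) = a * Ad v * a⁻¹)
    (hfix : ∀ (a : A) (t : U), t ∈ Ad.ker → φ a t = t)
    (hcent : ∀ t ∈ Ad.ker, ∀ v : U, t * v = v * t)
    (hAdconj : ∀ v w : U, φ (Ad v) w = v * w * v⁻¹)
    [hnor : Ad.range.Normal]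
    (α β : G →* A ⧸ Ad.range)
    (hconj : ∃ x : A ⧸ Ad.range, ∀ g : G, β g = x * α g * x⁻¹) :
    ∀ (a : G → A) (u : G → G → U), LiftPair Ad α a u →
      ∀ (b : G → A) (w : G → G → U), LiftPair Ad β b w →
        ∃ c : G → G → U, (∀ g h : G, c g h ∈ Ad.ker) ∧
          ∀ g h k : G, obstr φ b w g h k = obstr φ a u g h k * cob3 c g h k := by
  rintro a u ⟨ha1, haq, hau⟩ b w ⟨hb1, hbq, hbw⟩
  obtain ⟨x, hx⟩ := hconj
  obtain ⟨s, hs⟩ := QuotientGroup.mk_surjective x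
  -- choose lifts v g
  have hv0 : ∀ g : G, ∃ vv : U, b g = Ad vv * (s * a g * s⁻¹) := by
    intro g
    have h1 : ((b g * (s * a g * s⁻¹)⁻¹ : A) : A ⧸ Ad.range) = 1 := by
      rw [QuotientGroup.mk_mul, QuotientGroup.mk_inv, QuotientGroup.mk_mul,
        QuotientGroup.mk_mul, QuotientGroup.mk_inv, hbq g, haq g, hx g, hs]
      group
    obtain ⟨vv, hvv⟩ := (QuotientGroup.eq_one_iff _).mp h1
    exact ⟨vv, by rw [hvv]; group⟩
  choose v hv using hv0
  -- Ad values
  have hAdu : ∀ g h : G, Ad (u g h) = a g * a h * (a (g * h))⁻¹ := by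
    intro g h; rw [hau g h]; group
  have hAdw : ∀ g h : G, Ad (w g h) = b g * b h * (b (g * h))⁻¹ := by
    intro g h; rw [hbw g h]; group
  have hAdv : ∀ g : G, Ad (v g) = b g * (s * a g * s⁻¹)⁻¹ := by
    intro g; rw [hv g]; group
  -- automorphism composition facts
  have hψψ : ∀ (g h : G) (y : U), φ (s * a g * s⁻¹) (φ (s * a h * s⁻¹) y)
      = φ s (u g h) * φ (s * a (g * h) * s⁻¹) y * (φ s (u g h))⁻¹ := by
    intro g h y
    have hmulA : (s * a g * s⁻¹) * (s * a h * s⁻¹) = Ad (φ s (u g h)) * (s * a (g * h) * s⁻¹) := by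
      rw [hcomp s (u g h)]
      calc (s * a g * s⁻¹) * (s * a h * s⁻¹) = s * (a g * a h) * s⁻¹ := by group
      _ = s * (Ad (u g h) * a (g * h)) * s⁻¹ := by rw [hau g h]
      _ = s * Ad (u g h) * s⁻¹ * (s * a (g * h) * s⁻¹) := by group
    calc φ (s * a g * s⁻¹) (φ (s * a h * s⁻¹) y)
        = φ ((s * a g * s⁻¹) * (s * a h * s⁻¹)) y := by
          rw [map_mul φ (s * a g * s⁻¹) (s * a h * s⁻¹)]; rfl
      _ = φ (Ad (φ s (u g h)) * (s * a (g * h) * s⁻¹)) y := by rw [hmulA]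
      _ = φ (Ad (φ s (u g h))) (φ (s * a (g * h) * s⁻¹) y) := by
          rw [map_mul φ (Ad (φ s (u g h))) (s * a (g * h) * s⁻¹)]; rfl
      _ = φ s (u g h) * φ (s * a (g * h) * s⁻¹) y * (φ s (u g h))⁻¹ := hAdconj _ _
  have hψσ : ∀ (g : G) (y : U), φ (s * a g * s⁻¹) (φ s y) = φ s (φ (a g) y) := by
    intro g y
    calc φ (s * a g * s⁻¹) (φ s y) = φ ((s * a g * s⁻¹) * s) y := by
          rw [map_mul φ (s * a g * s⁻¹) s]; rfl
    _ = φ (s * a g) y := by rw [show (s * a g * s⁻¹) * s = s * a g from by group]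
    _ = φ s (φ (a g) y) := by rw [map_mul φ s (a g)]; rfl
  have hφb : ∀ (g : G) (y : U), φ (b g) y = v g * φ (s * a g * s⁻¹) y * (v g)⁻¹ := by
    intro g y
    calc φ (b g) y = φ (Ad (v g) * (s * a g * s⁻¹)) y := by rw [← hv g]
    _ = φ (Ad (v g)) (φ (s * a g * s⁻¹) y) := by rw [map_mul φ (Ad (v g)) (s * a g * s⁻¹)]; rfl
    _ = v g * φ (s * a g * s⁻¹) y * (v g)⁻¹ := hAdconj _ _
  have mapmul : ∀ (d : A) (m n : U), φ d (m * n) = φ d m * φ d n := fun d m n => map_mul _ _ _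
  have mapinv : ∀ (d : A) (m : U), φ d m⁻¹ = (φ d m)⁻¹ := fun d m => map_inv _ _
  have Admul : ∀ m n : U, Ad (m * n) = Ad m * Ad n := fun m n => map_mul _ _ _
  have Adinv : ∀ m : U, Ad m⁻¹ = (Ad m)⁻¹ := fun m => map_inv _ _
  -- obstruction lies in the kernel
  have he_ker : ∀ g h k : G, obstr φ a u g h k ∈ Ad.ker := by
    intro g h k
    rw [MonoidHom.mem_ker]
    simp only [obstr, map_mul, map_inv, hcomp, hAdu]
    rw [show g * (h * k) = g * h * k from (mul_assoc g h k).symm]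
    group
  -- the main X identity
  have hXmain : ∀ g h k : G,
      (v g * φ (s * a g * s⁻¹) (v h) * φ s (u g h) * (v (g * h))⁻¹) *
      (v (g * h) * φ (s * a (g * h) * s⁻¹) (v k) * φ s (u (g * h) k) * (v (g * (h * k)))⁻¹) *
      (v g * φ (s * a g * s⁻¹) (v h * φ (s * a h * s⁻¹) (v k) * φ s (u h k) * (v (h * k))⁻¹) * (v g)⁻¹ *
        (v g * φ (s * a g * s⁻¹) (v (h * k)) * φ s (u g (h * k)) * (v (g * (h * k)))⁻¹))⁻¹
      = obstr φ a u g h k := by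
    intro g h k
    have hEker := he_ker g h k
    have hEcomm : ∀ y : U, obstr φ a u g h k * y = y * obstr φ a u g h k :=
      fun y => hcent _ hEker y
    have hκ : φ (a g) (u h k) = (obstr φ a u g h k)⁻¹ * u g h * u (g * h) k * (u g (h * k))⁻¹ := by
      simp only [obstr]; group
    set E := obstr φ a u g h k with hE
    simp only [mapmul, mapinv]
    rw [hψψ g h (v k), hψσ g (u h k), hκ]
    simp only [mapmul, mapinv]
    rw [hfix s E hEker]
    simp only [mul_inv_rev, inv_inv, mul_assoc]
    simp only [mycentral_pull hEcomm, ← hEcomm]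
    group
  -- define the 2-cochain c
  set c : G → G → U := fun g h =>
    v g * φ (s * a g * s⁻¹) (v h) * φ s (u g h) * (v (g * h))⁻¹ * (w g h)⁻¹ with hc_def
  have hc_ker : ∀ g h : G, c g h ∈ Ad.ker := by
    intro g h
    rw [MonoidHom.mem_ker]
    simp only [hc_def, Admul, Adinv, hcomp, hAdu, hAdv, hAdw]
    group
  have hw' : ∀ g h : G, w g h =
      (c g h)⁻¹ * (v g * φ (s * a g * s⁻¹) (v h) * φ s (u g h) * (v (g * h))⁻¹) := by
    intro g h; simp only [hc_def]; group
  refine ⟨c, hc_ker, fun g h k => ?_⟩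
  have hφbw : φ (b g) (w h k) = (c h k)⁻¹ *
      (v g * φ (s * a g * s⁻¹) (v h * φ (s * a h * s⁻¹) (v k) * φ s (u h k) * (v (h * k))⁻¹) * (v g)⁻¹) := by
    rw [hw' h k, mapmul, mapinv, hfix (b g) (c h k) (hc_ker h k), hφb]
  have h1c : ∀ y : U, (c g h)⁻¹ * y = y * (c g h)⁻¹ := mycentral_inv (hcent _ (hc_ker g h))
  have h2c : ∀ y : U, (c (g * h) k)⁻¹ * y = y * (c (g * h) k)⁻¹ :=
    mycentral_inv (hcent _ (hc_ker (g * h) k))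
  have h3c : ∀ y : U, c h k * y = y * c h k := hcent _ (hc_ker h k)
  have h4c : ∀ y : U, c g (h * k) * y = y * c g (h * k) := hcent _ (hc_ker g (h * k))
  show w g h * w (g * h) k * (φ (b g) (w h k) * w g (h * k))⁻¹
      = obstr φ a u g h k * (c h k * (c (g * h) k)⁻¹ * c g (h * k) * (c g h)⁻¹)
  rw [hφbw, hw' g h, hw' (g * h) k, hw' g (h * k)]
  rw [show g * (h * k) = g * h * k from (mul_assoc g h k).symm]
  set E := obstr φ a u g h k with hE
  have hEcomm : ∀ y : U, E * y = y * E := hcent _ (he_ker g h k)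
  simp only [mul_inv_rev, inv_inv, mul_assoc]
  simp only [mycentral_pull h1c, ← h1c]
  simp only [mycentral_pull h2c, ← h2c]
  simp only [mycentral_pull h3c, ← h3c]
  simp only [mycentral_pull h4c, ← h4c]
  have hX2 : (v g * ((φ (s * (a g * s⁻¹))) (v h) * ((φ s) (u g h) * ((v (g * h))⁻¹ * (v (g * h) * ((φ (s * (a (g * h) * s⁻¹))) (v k) * ((φ s) (u (g * h) k) * ((v (g * (h * k)))⁻¹ * (v (g * (h * k)) * (((φ s) (u g (h * k)))⁻¹ * (((φ (s * (a g * s⁻¹))) (v (h * k)))⁻¹ * ((v g)⁻¹ * (v g * (((φ (s * (a g * s⁻¹))) (v h * ((φ (s * (a h * s⁻¹))) (v k) * ((φ s) (u h k) * (v (h * k))⁻¹))))⁻¹ * (v g)⁻¹)))))))))))))) = E := by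
    rw [hE, ← hXmain g h k]; group
  rw [hX2]
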